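/- In the Black-Scholes setting, for fixed S, T, σ > 0 and r, q ∈ ℝ, and for any strikes 0 < K2 < K3, the vertical-spread no-arbitrage condition holds: C(S,K2,T,r,q,σ) > C(S,K3,T,r,q,σ); i.e. the call price is strictly decreasing in the strike. -/

import Mathlib

open Real MeasureTheory

/-- Standard normal density. -/
noncomputable def stdNormalPdf (x : ℝ) : ℝ := Real.exp (-x ^ 2 / 2) / Real.sqrt (2 * Real.pi)

/-- Standard normal cumulative distribution function. -/
noncomputable def stdNormalCdf (x : ℝ) : ℝ := ∫ t in Set.Iic x, stdNormalPdf t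

/-- Black-Scholes `d₁`. -/
noncomputable def bsD1 (S K T r q σ : ℝ) : ℝ :=
  (Real.log (S / K) + (r - q + σ ^ 2 / 2) * T) / (σ * Real.sqrt T)

/-- Black-Scholes `d₂`. -/
noncomputable def bsD2 (S K T r q σ : ℝ) : ℝ := bsD1 S K T r q σ - σ * Real.sqrt T

/-- Black-Scholes call option price. -/
noncomputable def bsCall (S K T r q σ : ℝ) : ℝ :=
  S * Real.exp (-q * T) * stdNormalCdf (bsD1 S K T r q σ) -
    K * Real.exp (-r * T) * stdNormalCdf (bsD2 S K T r q σ)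

lemma stdNormalPdf_integrable : Integrable stdNormalPdf := by
  have h := (integrable_exp_neg_mul_sq (by norm_num : (0:ℝ) < 1/2)).div_const (Real.sqrt (2 * Real.pi))
  unfold stdNormalPdf
  convert h using 2 with x
  ring_nf

lemma pdf_cont : Continuous stdNormalPdf := by unfold stdNormalPdf; fun_prop

lemma pdf_pos (x : ℝ) : 0 < stdNormalPdf x :=
  div_pos (Real.exp_pos _) (Real.sqrt_pos.2 (by positivity))

lemma cdf_pos (x : ℝ) : 0 < stdNormalCdf x := by
  rw [stdNormalCdf, setIntegral_pos_iff_support_of_nonneg_ae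
    (Filter.Eventually.of_forall fun t => (pdf_pos t).le) stdNormalPdf_integrable.integrableOn]
  have : Function.support stdNormalPdf = Set.univ := by
    ext t; simp [(pdf_pos t).ne']
  simp [this, Real.volume_Iic]

lemma hasDerivAt_cdf (x : ℝ) : HasDerivAt stdNormalCdf (stdNormalPdf x) x := by
  have h1 : HasDerivAt (fun u => ∫ t in (0:ℝ)..u, stdNormalPdf t) (stdNormalPdf x) x :=
    intervalIntegral.integral_hasDerivAt_right
      (stdNormalPdf_integrable.intervalIntegrable)
      (pdf_cont.stronglyMeasurableAtFilter _ _) pdf_cont.continuousAt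
  have h2 := (hasDerivAt_const x (stdNormalCdf 0)).add h1
  rw [zero_add] at h2
  simp only [Pi.add_def] at h2
  refine h2.congr_of_eventuallyEq (Filter.Eventually.of_forall fun y => ?_)
  show stdNormalCdf y = stdNormalCdf 0 + ∫ t in (0:ℝ)..y, stdNormalPdf t
  rw [stdNormalCdf, stdNormalCdf,
    ← intervalIntegral.integral_Iic_sub_Iic stdNormalPdf_integrable.integrableOn
      stdNormalPdf_integrable.integrableOn]
  ring

lemma key_identity (S T σ r q : ℝ) (hS : 0 < S) (hT : 0 < T) (hσ : 0 < σ)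
    (K : ℝ) (hK : 0 < K) :
    S * Real.exp (-q * T) * stdNormalPdf (bsD1 S K T r q σ) =
      K * Real.exp (-r * T) * stdNormalPdf (bsD2 S K T r q σ) := by
  have hs : σ * Real.sqrt T ≠ 0 := by positivity
  have hsq : Real.sqrt T ^ 2 = T := Real.sq_sqrt hT.le
  have hd1s : bsD1 S K T r q σ * (σ * Real.sqrt T)
      = Real.log (S / K) + (r - q + σ ^ 2 / 2) * T := by
    rw [bsD1]; field_simp
  unfold stdNormalPdf bsD2
  set d1 := bsD1 S K T r q σ with hd1
  rw [← mul_div_assoc, ← mul_div_assoc]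
  congr 1
  have hSK : S = K * Real.exp (Real.log (S / K)) := by
    rw [Real.exp_log (by positivity)]; field_simp
  rw [hSK]
  simp only [mul_assoc, ← Real.exp_add]
  congr 2
  have expand : (d1 - σ * Real.sqrt T) ^ 2 = d1 ^ 2 - 2 * (d1 * (σ * Real.sqrt T)) + σ^2 * T := by
    nlinarith [hsq]
  rw [expand, hd1s]
  ring

lemma hasDerivAt_bsCall (S T σ r q : ℝ) (hS : 0 < S) (hT : 0 < T) (hσ : 0 < σ)
    (K : ℝ) (hK : 0 < K) :
    HasDerivAt (fun k => bsCall S k T r q σ)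
      (-(Real.exp (-r * T) * stdNormalCdf (bsD2 S K T r q σ))) K := by
  have hs : (0:ℝ) < σ * Real.sqrt T := by positivity
  -- derivative of d1 (and d2) in K
  have hd1 : HasDerivAt (fun k => bsD1 S k T r q σ) (-K⁻¹ / (σ * Real.sqrt T)) K := by
    have hlog : HasDerivAt (fun k : ℝ => Real.log (S / k))
        (-K⁻¹) K := by
      have h1 : HasDerivAt (fun k : ℝ => Real.log S - Real.log k) (0 - K⁻¹) K :=
        (hasDerivAt_const K (Real.log S)).sub (Real.hasDerivAt_log hK.ne')
      rw [zero_sub] at h1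
      refine h1.congr_of_eventuallyEq ?_
      filter_upwards [eventually_gt_nhds hK] with k hk
      rw [Real.log_div hS.ne' hk.ne']
    have := (hlog.add_const ((r - q + σ ^ 2 / 2) * T)).div_const (σ * Real.sqrt T)
    simpa [bsD1] using this
  have hd2 : HasDerivAt (fun k => bsD2 S k T r q σ) (-K⁻¹ / (σ * Real.sqrt T)) K := by
    simpa [bsD2] using hd1.sub_const (σ * Real.sqrt T)
  have hN1 : HasDerivAt (fun k => stdNormalCdf (bsD1 S k T r q σ))
      (stdNormalPdf (bsD1 S K T r q σ) * (-K⁻¹ / (σ * Real.sqrt T))) K :=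
    (hasDerivAt_cdf _).comp K hd1
  have hN2 : HasDerivAt (fun k => stdNormalCdf (bsD2 S k T r q σ))
      (stdNormalPdf (bsD2 S K T r q σ) * (-K⁻¹ / (σ * Real.sqrt T))) K :=
    (hasDerivAt_cdf _).comp K hd2
  have hterm1 := hN1.const_mul (S * Real.exp (-q * T))
  have hterm2 := ((hasDerivAt_id K).mul hN2).const_mul (Real.exp (-r * T))
  have h := hterm1.sub hterm2
  have harr : (fun k => S * Real.exp (-q * T) * stdNormalCdf (bsD1 S k T r q σ) -
      Real.exp (-r * T) * (id k * stdNormalCdf (bsD2 S k T r q σ))) =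
      fun k => bsCall S k T r q σ := by
    funext k; simp [bsCall]; ring
  simp only [Pi.sub_def, Pi.mul_def] at h
  rw [harr] at h
  refine h.congr_deriv ?_
  symm
  have hid := key_identity S T σ r q hS hT hσ K hK
  simp only [id_eq]
  have hs' : σ * Real.sqrt T ≠ 0 := hs.ne'
  rw [show S * Real.exp (-q*T) * (stdNormalPdf (bsD1 S K T r q σ) * (-K⁻¹ / (σ * Real.sqrt T)))
      = (S * Real.exp (-q*T) * stdNormalPdf (bsD1 S K T r q σ)) * (-K⁻¹ / (σ * Real.sqrt T)) by
      ring, hid]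
  field_simp
  ring

lemma bsCall_strictAntiOn (S T σ r q : ℝ) (hS : 0 < S) (hT : 0 < T) (hσ : 0 < σ) :
    StrictAntiOn (fun K => bsCall S K T r q σ) (Set.Ioi 0) := by
  apply strictAntiOn_of_deriv_neg (convex_Ioi 0)
  · exact fun K hK => (hasDerivAt_bsCall S T σ r q hS hT hσ K hK).continuousAt.continuousWithinAt
  · intro K hK
    rw [interior_Ioi] at hK
    rw [(hasDerivAt_bsCall S T σ r q hS hT hσ K hK).deriv]
    have := cdf_pos (bsD2 S K T r q σ)
    have := Real.exp_pos (-r * T)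
    nlinarith

/-- Vertical-spread no-arbitrage condition: the Black-Scholes call price is
strictly decreasing in the strike. -/
theorem bsCall_vertical_spread (S T σ r q : ℝ) (hS : 0 < S) (hT : 0 < T) (hσ : 0 < σ)
    (K2 K3 : ℝ) (hK2 : 0 < K2) (h23 : K2 < K3) :
    bsCall S K3 T r q σ < bsCall S K2 T r q σ :=
  bsCall_strictAntiOn S T σ r q hS hT hσ (Set.mem_Ioi.2 hK2)
    (Set.mem_Ioi.2 (hK2.trans h23)) h23
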